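/- arXiv:1512.07852 — 5 statements merged into one kernel-verified Lean document; each statement's English description precedes it below -/
import Mathlib

section
/- Let G be an (r,t)-Ruzsa–Szemerédi graph on n vertices, where t is odd. Then r ≤ (n/4)·(1 + 1/t). -/
/-- A finset `M` of edges is an *induced matching* in the graph `G`:
all its elements are edges of `G`, distinct edges share no vertex, and every
edge of `G` both of whose endpoints are covered by `M` belongs to `M`. -/
def IsInducedMatching {V : Type*} (G : SimpleGraph V) (M : Finset (Sym2 V)) : Prop :=
  (M : Set (Sym2 V)) ⊆ G.edgeSet ∧
  (∀ e ∈ M, ∀ f ∈ M, e ≠ f → ∀ v : V, v ∈ e → v ∉ f) ∧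
  (∀ e ∈ G.edgeSet, (∀ v ∈ e, ∃ f ∈ M, v ∈ f) → e ∈ M)

/-- `G` is an `(r, t)`-Ruzsa–Szemerédi graph: its edge set is partitioned into
`t` pairwise edge-disjoint induced matchings, each of size `r`. -/
def IsRSGraph {V : Type*} (G : SimpleGraph V) (r t : ℕ) : Prop :=
  ∃ M : Fin t → Finset (Sym2 V),
    (∀ i, IsInducedMatching G (M i)) ∧
    (∀ i, (M i).card = r) ∧
    (∀ i j, i ≠ j → Disjoint (M i) (M j)) ∧
    (∀ e : Sym2 V, e ∈ G.edgeSet ↔ ∃ i, e ∈ M i)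

/-- If `G` is an `(r,t)`-RS graph on `n` vertices and `t` is odd,
then `r ≤ (n/4)·(1 + 1/t)`. -/
theorem rs_upper_bound_odd {V : Type*} [Fintype V] (G : SimpleGraph V) (n r t : ℕ)
    (hn : Fintype.card V = n) (ht : Odd t) (hG : IsRSGraph G r t) :
    (r : ℝ) ≤ ((n : ℝ) / 4) * (1 + 1 / (t : ℝ)) := by
  classical
  obtain ⟨M, hind, hcard, hdisj, hcover⟩ := hG
  have ht1 : 1 ≤ t := ht.pos
  by_cases hr : r = 0
  · subst hr
    have : (0:ℝ) ≤ ((n : ℝ) / 4) * (1 + 1 / (t : ℝ)) := by positivity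
    simpa using this
  -- degree function
  set d : V → ℕ := fun v => (Finset.univ.filter fun i : Fin t => ∃ e ∈ M i, v ∈ e).card with hd
  set ef : Sym2 V → Finset V := fun e => Finset.univ.filter (· ∈ e) with hef
  have hef_mem : ∀ e (v : V), v ∈ ef e ↔ v ∈ e := by intro e v; simp [hef]
  have hef_pair : ∀ a b : V, ef s(a, b) = {a, b} := by
    intro a b; ext v; simp [hef, Sym2.mem_iff]
  have hedge : ∀ i : Fin t, ∀ e ∈ M i, ∃ a b : V, a ≠ b ∧ e = s(a, b) := by
    intro i e he
    induction e using Sym2.ind with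
    | _ a b =>
      have : G.Adj a b := (hind i).1 he
      exact ⟨a, b, this.ne, rfl⟩
  -- key: endpoints of an edge have small total degree
  have key : ∀ i : Fin t, ∀ a b : V, s(a, b) ∈ M i → d a + d b ≤ t + 1 := by
    intro i a b hab
    set A := Finset.univ.filter fun j : Fin t => ∃ e ∈ M j, a ∈ e with hA
    set B := Finset.univ.filter fun j : Fin t => ∃ e ∈ M j, b ∈ e with hB
    have hAB : A ∩ B ⊆ {i} := by
      intro j hj
      rw [Finset.mem_inter, hA, hB, Finset.mem_filter, Finset.mem_filter] at hj
      obtain ⟨⟨-, ea, hea, haea⟩, ⟨-, eb, heb, hbeb⟩⟩ := hj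
      rw [Finset.mem_singleton]
      by_contra hji
      have hGe : s(a, b) ∈ G.edgeSet := (hind i).1 hab
      have hmem : s(a, b) ∈ M j := by
        refine (hind j).2.2 _ hGe ?_
        intro v hv
        rw [Sym2.mem_iff] at hv
        rcases hv with rfl | rfl
        · exact ⟨ea, hea, haea⟩
        · exact ⟨eb, heb, hbeb⟩
      exact Finset.disjoint_left.mp (hdisj j i hji) hmem hab
    have hiA : i ∈ A := by
      rw [hA, Finset.mem_filter]
      exact ⟨Finset.mem_univ _, s(a, b), hab, Sym2.mem_mk_left a b⟩
    have hiB : i ∈ B := by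
      rw [hB, Finset.mem_filter]
      exact ⟨Finset.mem_univ _, s(a, b), hab, Sym2.mem_mk_right a b⟩
    have h1 : (A ∩ B).card ≤ 1 := by
      calc (A ∩ B).card ≤ ({i} : Finset (Fin t)).card := Finset.card_le_card hAB
        _ = 1 := Finset.card_singleton i
    have h2 : (A ∪ B).card ≤ t := by
      calc (A ∪ B).card ≤ (Finset.univ : Finset (Fin t)).card := Finset.card_le_univ _
        _ = t := by simp
    have : d a + d b = (A ∪ B).card + (A ∩ B).card :=
      (Finset.card_union_add_card_inter A B).symm
    omega
  -- disjointness of edge vertex sets within a matching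
  have hdisjef : ∀ i : Fin t, ∀ e ∈ M i, ∀ f ∈ M i, e ≠ f → Disjoint (ef e) (ef f) := by
    intro i e he f hf hne
    rw [Finset.disjoint_left]
    intro v hv hvf
    exact (hind i).2.1 e he f hf hne v ((hef_mem e v).mp hv) ((hef_mem f v).mp hvf)
  -- covered vertices of matching i
  have hcovset : ∀ j : Fin t,
      (Finset.univ.filter fun v : V => ∃ e ∈ M j, v ∈ e) = (M j).biUnion ef := by
    intro j; ext v; simp [hef]
  have hcov : ∀ i : Fin t, ((M i).biUnion ef).card = 2 * r := by
    intro i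
    rw [Finset.card_biUnion (fun e he f hf hne => hdisjef i e he f hf hne)]
    have : ∀ e ∈ M i, (ef e).card = 2 := by
      intro e he
      obtain ⟨a, b, hne, rfl⟩ := hedge i e he
      rw [hef_pair]
      exact Finset.card_pair hne
    rw [Finset.sum_congr rfl this, Finset.sum_const, smul_eq_mul, hcard i, mul_comm]
  -- sum of degrees
  have hS1 : ∑ v : V, d v = 2 * r * t := by
    have h1 : ∑ v : V, d v
        = ∑ j : Fin t, (Finset.univ.filter fun v : V => ∃ e ∈ M j, v ∈ e).card := by
      simp only [hd, Finset.card_filter]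
      rw [Finset.sum_comm]
    rw [h1, Finset.sum_congr rfl fun j _ => by rw [hcovset j, hcov j]]
    simp [mul_comm]
  -- sum of squared degrees
  have hS2 : ∑ v : V, d v ^ 2 ≤ t * (r * (t + 1)) := by
    have h1 : ∑ v : V, d v ^ 2 = ∑ j : Fin t, ∑ v ∈ (M j).biUnion ef, d v := by
      have : ∀ v : V, d v ^ 2
          = ∑ j : Fin t, if (∃ e ∈ M j, v ∈ e) then d v else 0 := by
        intro v
        rw [← Finset.sum_filter, Finset.sum_const, smul_eq_mul]
        simp [hd, sq]
      rw [Finset.sum_congr rfl fun v _ => this v, Finset.sum_comm]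
      refine Finset.sum_congr rfl fun j _ => ?_
      rw [← Finset.sum_filter, hcovset j]
    rw [h1]
    calc ∑ j : Fin t, ∑ v ∈ (M j).biUnion ef, d v
        = ∑ j : Fin t, ∑ e ∈ M j, ∑ v ∈ ef e, d v := by
          refine Finset.sum_congr rfl fun j _ => ?_
          rw [Finset.sum_biUnion]
          intro e he f hf hne
          exact hdisjef j e he f hf hne
      _ ≤ ∑ j : Fin t, ∑ e ∈ M j, (t + 1) := by
          refine Finset.sum_le_sum fun j _ => Finset.sum_le_sum fun e he => ?_
          obtain ⟨a, b, hne, rfl⟩ := hedge j e he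
          rw [hef_pair, Finset.sum_pair hne]
          exact key j a b he
      _ = t * (r * (t + 1)) := by
          simp [Finset.sum_const, hcard, mul_comm, mul_assoc, mul_left_comm]
  -- Cauchy-Schwarz
  have hCS : (∑ v : V, d v) ^ 2 ≤ n * ∑ v : V, d v ^ 2 := by
    have := sq_sum_le_card_mul_sum_sq (s := (Finset.univ : Finset V)) (f := d)
    simpa [Finset.card_univ, hn] using this
  have hmain : 4 * r * t ≤ n * (t + 1) := by
    have h3 : (2 * r * t) ^ 2 ≤ n * (t * (r * (t + 1))) := by
      calc (2 * r * t) ^ 2 = (∑ v : V, d v) ^ 2 := by rw [hS1]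
        _ ≤ n * ∑ v : V, d v ^ 2 := hCS
        _ ≤ n * (t * (r * (t + 1))) := Nat.mul_le_mul_left n hS2
    have hrt : 0 < r * t := Nat.mul_pos (Nat.pos_of_ne_zero hr) ht1
    have h4 : (4 * r * t) * (r * t) ≤ (n * (t + 1)) * (r * t) := by
      calc (4 * r * t) * (r * t) = (2 * r * t) ^ 2 := by ring
        _ ≤ n * (t * (r * (t + 1))) := h3
        _ = (n * (t + 1)) * (r * t) := by ring
    exact Nat.le_of_mul_le_mul_right h4 hrt
  -- finish over ℝ
  have htR : (0:ℝ) < (t : ℝ) := by exact_mod_cast ht1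
  have hmainR : 4 * (r:ℝ) * t ≤ (n:ℝ) * (t + 1) := by exact_mod_cast hmain
  rw [show ((n : ℝ) / 4) * (1 + 1 / (t : ℝ)) = (n * (t + 1)) / (4 * t) by
    field_simp]
  rw [le_div_iff₀ (by positivity)]
  nlinarith [hmainR]
end

section
/- Let G be an (r,t)-Ruzsa–Szemerédi graph on n vertices, where t is even. Then r ≤ (n/4)·(1 + 1/(t+1)). -/
lemma key_nat (a b t : ℕ) (ha : 1 ≤ a) (hb : 1 ≤ b) (hab : a + b ≤ t + 1)
    (ht : Even t) : 4 * (t + 1) * (a * b) ≤ (a + b) * (t * (t + 2)) := by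
  rcases Nat.lt_or_ge (a + b) (t + 1) with h | h
  · have h1 : a + b ≤ t := by omega
    zify at h1 ha hb ⊢
    have e1 : 4 * ((a:ℤ) * b) ≤ ((a:ℤ) + b)^2 := by nlinarith [sq_nonneg ((a:ℤ) - b)]
    have e2 : ((a:ℤ) + b)^2 ≤ ((a:ℤ) + b) * t := by nlinarith
    nlinarith [e1, e2]
  · have h2 : a + b = t + 1 := by omega
    have hne : a ≠ b := by obtain ⟨k, hk⟩ := ht; omega
    have h3 : 1 ≤ ((a : ℤ) - b)^2 := by
      rcases Nat.lt_or_ge a b with h' | h'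
      · have : (a:ℤ) + 1 ≤ b := by exact_mod_cast h'
        nlinarith
      · have h'' : b < a := by omega
        have : (b:ℤ) + 1 ≤ a := by exact_mod_cast h''
        nlinarith
    zify at h2 ha hb ⊢
    have e3 : 4 * ((a:ℤ) * b) ≤ (t:ℤ) * (t + 2) := by nlinarith [h3, h2]
    have e4 : (0:ℤ) ≤ (t:ℤ) + 1 := by linarith
    rw [h2]
    nlinarith [mul_le_mul_of_nonneg_left e3 e4]

lemma key_real (a b t : ℕ) (ha : 1 ≤ a) (hb : 1 ≤ b) (hab : a + b ≤ t + 1)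
    (ht : Even t) (ht' : 0 < t) :
    4 * ((t:ℝ) + 1) / ((t:ℝ) * ((t:ℝ) + 2)) ≤ 1 / (a:ℝ) + 1 / (b:ℝ) := by
  have ha' : (0:ℝ) < a := by exact_mod_cast ha
  have hb' : (0:ℝ) < b := by exact_mod_cast hb
  have ht'' : (0:ℝ) < t := by exact_mod_cast ht'
  have hden : (0:ℝ) < (t:ℝ) * ((t:ℝ) + 2) := by positivity
  rw [div_add_div _ _ (ne_of_gt ha') (ne_of_gt hb'), div_le_div_iff₀ hden (by positivity)]
  have h := key_nat a b t ha hb hab ht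
  have h' : (4 * (t + 1) * (a * b) : ℝ) ≤ ((a + b) * (t * (t + 2)) : ℝ) := by exact_mod_cast h
  nlinarith [h']

/-- If `G` is an `(r,t)`-RS graph on `n` vertices and `t` is even (and positive),
then `r ≤ (n/4)·(1 + 1/(t+1))`. -/
theorem rs_upper_bound_even {V : Type*} [Fintype V] (G : SimpleGraph V) (n r t : ℕ)
    (hn : Fintype.card V = n) (ht : Even t) (ht' : 0 < t) (hG : IsRSGraph G r t) :
    (r : ℝ) ≤ ((n : ℝ) / 4) * (1 + 1 / ((t : ℝ) + 1)) := by
  classical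
  obtain ⟨M, hind, hcard, hdisj, hcov⟩ := hG
  set E : Finset (Sym2 V) := Finset.univ.biUnion (fun i => M i) with hEdef
  have hmemE : ∀ e, e ∈ E ↔ ∃ i, e ∈ M i := by intro e; simp [hEdef]
  have hEedge : ∀ e ∈ E, e ∈ G.edgeSet := fun e he => (hcov e).2 ((hmemE e).1 he)
  have hEcard : E.card = r * t := by
    rw [hEdef, Finset.card_biUnion (fun i _ j _ hij => hdisj i j hij)]
    simp [hcard, Finset.sum_const, mul_comm]
  set d : V → ℕ := fun v => (E.filter (fun e => v ∈ e)).card with hddef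
  set A : V → Finset (Fin t) := fun v =>
    Finset.univ.filter (fun i => ∃ f ∈ M i, v ∈ f) with hAdef
  -- d v = (A v).card
  have hdA : ∀ v, d v = (A v).card := by
    intro v
    apply Finset.card_bij (fun e he => ((hmemE e).1 (Finset.mem_filter.1 he).1).choose)
    · intro e he
      have hv : v ∈ e := (Finset.mem_filter.1 he).2
      have hs := ((hmemE e).1 (Finset.mem_filter.1 he).1).choose_spec
      simp only [hAdef, Finset.mem_filter, Finset.mem_univ, true_and]
      exact ⟨e, hs, hv⟩
    · intro e he f hf heq
      have hse := ((hmemE e).1 (Finset.mem_filter.1 he).1).choose_spec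
      have hsf := ((hmemE f).1 (Finset.mem_filter.1 hf).1).choose_spec
      rw [heq] at hse
      by_contra hne
      exact (hind _).2.1 e hse f hsf hne v (Finset.mem_filter.1 he).2
        (Finset.mem_filter.1 hf).2
    · intro i hi
      simp only [hAdef, Finset.mem_filter, Finset.mem_univ, true_and] at hi
      obtain ⟨f, hfM, hvf⟩ := hi
      have hfE : f ∈ E := (hmemE f).2 ⟨i, hfM⟩
      have hfE' : f ∈ E.filter (fun e => v ∈ e) := Finset.mem_filter.2 ⟨hfE, hvf⟩
      refine ⟨f, hfE', ?_⟩
      have hs := ((hmemE f).1 (Finset.mem_filter.1 hfE').1).choose_spec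
      by_contra hne
      exact (Finset.disjoint_left.1 (hdisj _ _ hne) hs) hfM
  -- for an edge of E, the sum of indices counts is ≤ t + 1
  have hkey : ∀ x y, s(x, y) ∈ E → d x + d y ≤ t + 1 := by
    intro x y he
    obtain ⟨i₀, hi₀⟩ := (hmemE _).1 he
    have hsub : A x ∩ A y ⊆ {i₀} := by
      intro j hj
      simp only [hAdef, Finset.mem_inter, Finset.mem_filter, Finset.mem_univ, true_and] at hj
      have hmem : s(x, y) ∈ M j := by
        apply (hind j).2.2 _ (hEedge _ he)
        intro v hv
        rw [Sym2.mem_iff] at hv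
        rcases hv with rfl | rfl
        · exact hj.1
        · exact hj.2
      rcases eq_or_ne j i₀ with rfl | hne
      · exact Finset.mem_singleton_self _
      · exact absurd hi₀ (Finset.disjoint_left.1 (hdisj _ _ hne) hmem)
    have hcapcard : (A x ∩ A y).card ≤ 1 := by
      calc (A x ∩ A y).card ≤ ({i₀} : Finset (Fin t)).card := Finset.card_le_card hsub
        _ = 1 := Finset.card_singleton _
    have huni : (A x ∪ A y).card ≤ t := by
      calc (A x ∪ A y).card ≤ (Finset.univ : Finset (Fin t)).card :=
            Finset.card_le_card (Finset.subset_univ _)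
        _ = t := by simp
    have := Finset.card_union_add_card_inter (A x) (A y)
    rw [hdA, hdA]
    omega
  have hdpos : ∀ x y, s(x, y) ∈ E → 1 ≤ d x := by
    intro x y he
    have : s(x, y) ∈ E.filter (fun e => x ∈ e) :=
      Finset.mem_filter.2 ⟨he, Sym2.mem_mk_left x y⟩
    exact Finset.card_pos.2 ⟨_, this⟩
  -- the weight function
  set c : ℝ := 4 * ((t:ℝ) + 1) / ((t:ℝ) * ((t:ℝ) + 2)) with hcdef
  have hedge : ∀ e ∈ E, c ≤ ∑ v ∈ Finset.univ.filter (fun v => v ∈ e), (1:ℝ) / (d v) := by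
    intro e he
    revert he
    induction e using Sym2.inductionOn with
    | hf x y =>
      intro he
      have hxy : x ≠ y := (G.ne_of_adj ((SimpleGraph.mem_edgeSet G).1 (hEedge _ he)))
      have hfilter : Finset.univ.filter (fun v => v ∈ s(x, y)) = {x, y} := by
        ext v
        simp [Sym2.mem_iff]
      rw [hfilter, Finset.sum_insert (by simp [hxy]), Finset.sum_singleton]
      have h1 : 1 ≤ d x := hdpos x y he
      have h2 : 1 ≤ d y := hdpos y x (by rwa [Sym2.eq_swap])
      have h3 : d x + d y ≤ t + 1 := hkey x y he
      exact key_real (d x) (d y) t h1 h2 h3 ht ht'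
  have hsum1 : (E.card : ℝ) * c ≤ ∑ e ∈ E, ∑ v ∈ Finset.univ.filter (fun v => v ∈ e), (1:ℝ) / (d v) := by
    calc (E.card : ℝ) * c = E.card • c := by rw [nsmul_eq_mul]
      _ ≤ _ := Finset.card_nsmul_le_sum E _ c hedge
  have hswap : ∑ e ∈ E, ∑ v ∈ Finset.univ.filter (fun v => v ∈ e), (1:ℝ) / (d v)
      = ∑ v : V, (d v : ℝ) * (1 / (d v)) := by
    have hcomm := Finset.sum_comm' (s := E)
      (t := fun e => Finset.univ.filter (fun v => v ∈ e))
      (t' := (Finset.univ : Finset V))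
      (s' := fun v => E.filter (fun e => v ∈ e))
      (f := fun _e v => (1:ℝ) / (d v))
      (by intro e v
          simp only [Finset.mem_filter, Finset.mem_univ, true_and, and_true])
    rw [hcomm]
    apply Finset.sum_congr rfl
    intro v _
    rw [Finset.sum_const, nsmul_eq_mul]
  have hbound : ∑ v : V, (d v : ℝ) * (1 / (d v)) ≤ (n : ℝ) := by
    calc ∑ v : V, (d v : ℝ) * (1 / (d v)) ≤ ∑ _v : V, (1:ℝ) := by
          apply Finset.sum_le_sum
          intro v _
          rcases Nat.eq_zero_or_pos (d v) with h | h
          · simp [h]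
          · have : (d v : ℝ) ≠ 0 := by positivity
            rw [mul_one_div, div_self this]
      _ = (n : ℝ) := by simp [hn]
  have hmain : (r : ℝ) * t * c ≤ (n : ℝ) := by
    have := le_trans (hsum1.trans (le_of_eq hswap)) hbound
    rwa [hEcard, Nat.cast_mul] at this
  -- final arithmetic
  have hT : (0:ℝ) < t := by exact_mod_cast ht'
  have hT1 : (0:ℝ) < (t:ℝ) + 1 := by linarith
  have hT2 : (0:ℝ) < (t:ℝ) + 2 := by linarith
  have hpos : (0:ℝ) < (t:ℝ) * ((t:ℝ) + 2) := by positivity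
  have hc : (r : ℝ) * t * (4 * ((t:ℝ) + 1)) ≤ (n : ℝ) * ((t:ℝ) * ((t:ℝ) + 2)) := by
    have h := mul_le_mul_of_nonneg_right hmain hpos.le
    calc (r : ℝ) * t * (4 * ((t:ℝ) + 1))
        = ((r : ℝ) * t * (4 * ((t:ℝ) + 1) / ((t:ℝ) * ((t:ℝ) + 2)))) * ((t:ℝ) * ((t:ℝ) + 2)) := by
          field_simp
      _ ≤ _ := h
  have hgoal : (r : ℝ) * (4 * ((t:ℝ) + 1)) ≤ (n : ℝ) * ((t:ℝ) + 2) := by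
    refine le_of_mul_le_mul_left ?_ hT
    nlinarith [hc]
  have heq : (n : ℝ) / 4 * (1 + 1 / ((t:ℝ) + 1)) = (n : ℝ) * ((t:ℝ) + 2) / (4 * ((t:ℝ) + 1)) := by
    field_simp
    try ring_nf
    try tauto
  rw [heq, le_div_iff₀ (by positivity)]
  nlinarith [hgoal]
end

section
/- For every positive integer k, the Kneser graph KG(2k+1,k), whose vertices are the k-element subsets of a (2k+1)-element set with two vertices adjacent iff the corresponding sets are disjoint, is an (r, 2k+1)-Ruzsa–Szemerédi graph on n = C(2k+1,k) vertices with r = (1/2)·C(2k,k) = (n/4)·(1 + 1/(2k+1)). The matchings can be taken to be M_1, …, M_{2k+1}, where the edge (A,B) belongs to M_i iff A ∩ B = ∅ and A ∪ B = [2k+1] \ {i}. -/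
/-- The Kneser graph `KG(2k+1, k)`: vertices are the `k`-element subsets of a
`(2k+1)`-element set, two of them adjacent iff they are disjoint. -/
def kneserGraph (k : ℕ) : SimpleGraph {s : Finset (Fin (2 * k + 1)) // s.card = k} where
  Adj A B := Disjoint A.1 B.1 ∧ A ≠ B
  symm := ⟨fun A B h => ⟨h.1.symm, h.2.symm⟩⟩
  loopless := ⟨fun A h => h.2 rfl⟩

namespace KneserRS

variable {k : ℕ}

abbrev V (k : ℕ) := {s : Finset (Fin (2 * k + 1)) // s.card = k}

def cond (k : ℕ) (i : Fin (2 * k + 1)) : Sym2 (V k) → Prop :=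
  Sym2.lift ⟨fun A B => Disjoint A.1 B.1 ∧ A.1 ∪ B.1 = Finset.univ \ {i},
    fun A B => by
      simp only [eq_iff_iff]
      constructor <;> rintro ⟨h1, h2⟩ <;>
        exact ⟨h1.symm, by rwa [Finset.union_comm]⟩⟩

open Classical in
noncomputable def M (k : ℕ) (i : Fin (2 * k + 1)) : Finset (Sym2 (V k)) :=
  Finset.univ.filter (cond k i)

lemma mem_M_iff (i : Fin (2 * k + 1)) (A B : V k) :
    s(A, B) ∈ M k i ↔ Disjoint A.1 B.1 ∧ A.1 ∪ B.1 = Finset.univ \ {i} := by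
  classical
  unfold M
  rw [Finset.mem_filter]
  simp [cond]

lemma card_univ_sdiff (i : Fin (2 * k + 1)) :
    (Finset.univ \ {i} : Finset (Fin (2 * k + 1))).card = 2 * k := by
  rw [Finset.card_sdiff_of_subset (by simp)]
  simp

lemma partner_eq {i : Fin (2 * k + 1)} {A B : V k}
    (h : s(A, B) ∈ M k i) : B.1 = (Finset.univ \ {i}) \ A.1 := by
  obtain ⟨h1, h2⟩ := (mem_M_iff i A B).1 h
  rw [← h2, Finset.union_sdiff_cancel_left h1]

lemma subset_of_mem {i : Fin (2 * k + 1)} {A B : V k}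
    (h : s(A, B) ∈ M k i) : A.1 ⊆ Finset.univ \ {i} := by
  obtain ⟨_, h2⟩ := (mem_M_iff i A B).1 h
  rw [← h2]; exact Finset.subset_union_left

lemma ne_of_mem (hk : 0 < k) {i : Fin (2 * k + 1)} {A B : V k}
    (h : s(A, B) ∈ M k i) : A ≠ B := by
  obtain ⟨h1, _⟩ := (mem_M_iff i A B).1 h
  rintro rfl
  have : A.1 = ∅ := by simpa using h1
  have h2 := A.2
  rw [this, Finset.card_empty] at h2
  omega


lemma mem_edgeSet_of_mem (hk : 0 < k) {i : Fin (2 * k + 1)} {e : Sym2 (V k)}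
    (h : e ∈ M k i) : e ∈ (kneserGraph k).edgeSet := by
  induction e using Sym2.ind with
  | _ A B =>
    obtain ⟨h1, _⟩ := (mem_M_iff i A B).1 h
    exact (SimpleGraph.mem_edgeSet _).2 ⟨h1, ne_of_mem hk h⟩

/-- vertices avoiding i -/
noncomputable def S (k : ℕ) (i : Fin (2 * k + 1)) : Finset (V k) :=
  Finset.univ.filter (fun A => i ∉ A.1)

lemma card_S (i : Fin (2 * k + 1)) : (S k i).card = (2 * k).choose k := by
  classical
  have : (S k i).card = ((Finset.univ \ {i} : Finset (Fin (2 * k + 1))).powersetCard k).card := by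
    apply Finset.card_bij (fun A _ => A.1)
    · intro A hA
      simp only [S, Finset.mem_filter] at hA
      rw [Finset.mem_powersetCard]
      exact ⟨fun x hx => by simp [Finset.mem_sdiff]; rintro rfl; exact hA.2 hx, A.2⟩
    · intro A _ B _ h
      exact Subtype.ext h
    · intro s hs
      rw [Finset.mem_powersetCard] at hs
      refine ⟨⟨s, hs.2⟩, ?_, rfl⟩
      simp only [S, Finset.mem_filter]
      refine ⟨Finset.mem_univ _, fun hi => ?_⟩
      have := hs.1 hi
      simp at this
  rw [this, Finset.card_powersetCard, card_univ_sdiff]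

/-- the partner map -/
noncomputable def pf (k : ℕ) (i : Fin (2 * k + 1)) (A : V k) : Sym2 (V k) :=
  if h : ((Finset.univ \ {i}) \ A.1).card = k then s(A, ⟨_, h⟩) else s(A, A)

lemma card_partner {i : Fin (2 * k + 1)} {A : V k} (h : i ∉ A.1) :
    ((Finset.univ \ {i}) \ A.1).card = k := by
  have hsub : A.1 ⊆ Finset.univ \ {i} := fun x hx => by
    simp [Finset.mem_sdiff]; rintro rfl; exact h hx
  rw [Finset.card_sdiff_of_subset hsub, card_univ_sdiff, A.2]
  omega

lemma pf_mem {i : Fin (2 * k + 1)} {A : V k} (h : A ∈ S k i) : pf k i A ∈ M k i := by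
  simp only [S, Finset.mem_filter] at h
  have hc := card_partner h.2
  have hsub : A.1 ⊆ Finset.univ \ {i} := fun x hx => by
    simp [Finset.mem_sdiff]; rintro rfl; exact h.2 hx
  rw [pf, dif_pos hc, mem_M_iff]
  exact ⟨Finset.disjoint_sdiff, Finset.union_sdiff_of_subset hsub⟩

lemma pf_eq_of_mem (hk : 0 < k) {i : Fin (2 * k + 1)} {A B : V k}
    (h : s(A, B) ∈ M k i) : pf k i A = s(A, B) := by
  have hB := partner_eq h
  have hiA : i ∉ A.1 := fun hi => by
    have := subset_of_mem h hi
    simp at this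
  have hc := card_partner hiA
  rw [pf, dif_pos hc]
  have : (⟨(Finset.univ \ {i}) \ A.1, hc⟩ : V k) = B := Subtype.ext hB.symm
  rw [this]

lemma card_M (hk : 0 < k) (i : Fin (2 * k + 1)) :
    2 * (M k i).card = (2 * k).choose k := by
  classical
  rw [← card_S i]
  rw [Finset.card_eq_sum_card_fiberwise (f := pf k i) (t := M k i) (fun A hA => pf_mem hA)]
  rw [Finset.sum_const_nat ?_, Nat.mul_comm]
  intro e he
  induction e using Sym2.ind with
  | _ A B =>
    have hAB : A ≠ B := ne_of_mem hk he
    have hfilter : (S k i).filter (fun C => pf k i C = s(A, B)) = {A, B} := by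
      ext C
      simp only [Finset.mem_filter, Finset.mem_insert, Finset.mem_singleton]
      constructor
      · rintro ⟨hC, hfC⟩
        have : C ∈ pf k i C := by
          rw [pf]; split <;> simp
        rw [hfC] at this
        simpa using this
      · rintro (rfl | rfl)
        · constructor
          · simp only [S, Finset.mem_filter]
            refine ⟨Finset.mem_univ _, fun hi => by have := subset_of_mem he hi; simp at this⟩
          · exact pf_eq_of_mem hk he
        · have he' : s(C, A) ∈ M k i := by rwa [Sym2.eq_swap] at he
          constructor
          · simp only [S, Finset.mem_filter]
            refine ⟨Finset.mem_univ _, fun hi => by have := subset_of_mem he' hi; simp at this⟩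
          · rw [pf_eq_of_mem hk he', Sym2.eq_swap]
    rw [hfilter, Finset.card_pair hAB]


lemma eq_pf_of_mem (hk : 0 < k) {i : Fin (2 * k + 1)} {e : Sym2 (V k)}
    (he : e ∈ M k i) {v : V k} (hv : v ∈ e) : e = pf k i v := by
  induction e using Sym2.ind with
  | _ A B =>
    rw [Sym2.mem_iff] at hv
    rcases hv with rfl | rfl
    · exact (pf_eq_of_mem hk he).symm
    · have he' : s(v, A) ∈ M k i := by rwa [Sym2.eq_swap] at he
      rw [← Sym2.eq_swap]
      exact (pf_eq_of_mem hk he').symm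

lemma not_mem_of_covered {i : Fin (2 * k + 1)} {f : Sym2 (V k)}
    (hf : f ∈ M k i) {A : V k} (hA : A ∈ f) : i ∉ A.1 := by
  induction f using Sym2.ind with
  | _ C D =>
    rw [Sym2.mem_iff] at hA
    intro hi
    rcases hA with rfl | rfl
    · have := subset_of_mem hf hi; simp at this
    · have hf' : s(A, C) ∈ M k i := by rwa [Sym2.eq_swap] at hf
      have := subset_of_mem hf' hi; simp at this

lemma induced (hk : 0 < k) (i : Fin (2 * k + 1)) :
    IsInducedMatching (kneserGraph k) (M k i) := by
  refine ⟨fun e he => mem_edgeSet_of_mem hk he, ?_, ?_⟩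
  · intro e he f hf hef v hve hvf
    exact hef ((eq_pf_of_mem hk he hve).trans (eq_pf_of_mem hk hf hvf).symm)
  · intro e he hcov
    induction e using Sym2.ind with
    | _ A B =>
      obtain ⟨hd, hne⟩ : Disjoint A.1 B.1 ∧ A ≠ B := (SimpleGraph.mem_edgeSet _).1 he
      obtain ⟨fA, hfA, hAfA⟩ := hcov A (by simp)
      obtain ⟨fB, hfB, hBfB⟩ := hcov B (by simp)
      have hiA := not_mem_of_covered hfA hAfA
      have hiB := not_mem_of_covered hfB hBfB
      rw [mem_M_iff]
      refine ⟨hd, Finset.eq_of_subset_of_card_le ?_ ?_⟩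
      · intro x hx
        simp only [Finset.mem_union] at hx
        simp only [Finset.mem_sdiff, Finset.mem_univ, Finset.mem_singleton, true_and]
        rcases hx with hx | hx
        · rintro rfl; exact hiA hx
        · rintro rfl; exact hiB hx
      · rw [card_univ_sdiff, Finset.card_union_of_disjoint hd, A.2, B.2]
        omega

lemma cover (hk : 0 < k) (e : Sym2 (V k)) :
    e ∈ (kneserGraph k).edgeSet ↔ ∃ i, e ∈ M k i := by
  constructor
  · intro he
    induction e using Sym2.ind with
    | _ A B =>
      obtain ⟨hd, hne⟩ : Disjoint A.1 B.1 ∧ A ≠ B := (SimpleGraph.mem_edgeSet _).1 he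
      have hcard : (Finset.univ \ (A.1 ∪ B.1) : Finset (Fin (2 * k + 1))).card = 1 := by
        rw [Finset.card_sdiff_of_subset (Finset.subset_univ _), Finset.card_union_of_disjoint hd,
          A.2, B.2]
        simp
        omega
      obtain ⟨i, hi⟩ := Finset.card_eq_one.1 hcard
      refine ⟨i, (mem_M_iff i A B).2 ⟨hd, ?_⟩⟩
      rw [← hi, Finset.sdiff_sdiff_eq_self (Finset.subset_univ _)]
  · rintro ⟨i, hi⟩
    exact mem_edgeSet_of_mem hk hi

lemma M_disjoint (i j : Fin (2 * k + 1)) (hij : i ≠ j) : Disjoint (M k i) (M k j) := by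
  rw [Finset.disjoint_left]
  intro e hei hej
  induction e using Sym2.ind with
  | _ A B =>
    obtain ⟨_, h2⟩ := (mem_M_iff i A B).1 hei
    obtain ⟨_, h2'⟩ := (mem_M_iff j A B).1 hej
    have : (Finset.univ \ {i} : Finset (Fin (2 * k + 1))) = Finset.univ \ {j} :=
      h2 ▸ h2'
    apply hij
    have hi : i ∈ (Finset.univ \ {j} : Finset (Fin (2 * k + 1))) ∨ i = j := by
      by_cases h : i = j
      · right; exact h
      · left; simp [h]
    rcases hi with hi | hi
    · rw [← this] at hi; simp at hi
    · exact hi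

end KneserRS

/-- For every positive `k`, the Kneser graph `KG(2k+1,k)` on `n = C(2k+1,k)` vertices is an
`(r, 2k+1)`-RS graph with `r = C(2k,k)/2 = (n/4)(1 + 1/(2k+1))`; the matchings can be taken
to be `M_1, …, M_{2k+1}`, where the edge `(A,B)` belongs to `M_i` iff `A ∩ B = ∅` and
`A ∪ B = [2k+1] \ {i}`. -/

theorem kneser_is_RS (k : ℕ) (hk : 0 < k) :
    ∃ r : ℕ,
      2 * r = (2 * k).choose k ∧
      (r : ℝ) = (((2 * k + 1).choose k : ℝ) / 4) * (1 + 1 / (2 * (k : ℝ) + 1)) ∧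
      Fintype.card {s : Finset (Fin (2 * k + 1)) // s.card = k} = (2 * k + 1).choose k ∧
      ∃ M : Fin (2 * k + 1) → Finset (Sym2 {s : Finset (Fin (2 * k + 1)) // s.card = k}),
        (∀ i, IsInducedMatching (kneserGraph k) (M i)) ∧
        (∀ i, (M i).card = r) ∧
        (∀ i j, i ≠ j → Disjoint (M i) (M j)) ∧
        (∀ e : Sym2 {s : Finset (Fin (2 * k + 1)) // s.card = k},
          e ∈ (kneserGraph k).edgeSet ↔ ∃ i, e ∈ M i) ∧
        (∀ (i : Fin (2 * k + 1)) (A B : {s : Finset (Fin (2 * k + 1)) // s.card = k}),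
          s(A, B) ∈ M i ↔ Disjoint A.1 B.1 ∧ A.1 ∪ B.1 = Finset.univ \ {i}) := by
  have i0 : Fin (2 * k + 1) := ⟨0, by omega⟩
  refine ⟨(KneserRS.M k i0).card, KneserRS.card_M hk i0, ?_, ?_, KneserRS.M k,
    KneserRS.induced hk, ?_, KneserRS.M_disjoint, KneserRS.cover hk,
    fun i A B => KneserRS.mem_M_iff i A B⟩
  · -- real arithmetic
    have h2r : 2 * (KneserRS.M k i0).card = (2 * k).choose k := KneserRS.card_M hk i0
    have hnat : (2 * k + 1) * (2 * k).choose k = (2 * k + 1).choose (k + 1) * (k + 1) :=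
      Nat.add_one_mul_choose_eq (2 * k) k
    have hsymm : (2 * k + 1).choose (k + 1) = (2 * k + 1).choose k := Nat.choose_symm_half k
    rw [hsymm] at hnat
    have A1 : (2 * (k : ℝ) + 1) * ((2 * k).choose k : ℝ)
        = ((2 * k + 1).choose k : ℝ) * ((k : ℝ) + 1) := by exact_mod_cast hnat
    have A2 : 2 * ((KneserRS.M k i0).card : ℝ) = ((2 * k).choose k : ℝ) := by
      exact_mod_cast h2r
    have hpos : (2 * (k : ℝ) + 1) ≠ 0 := by positivity
    field_simp
    linear_combination (2 * (2 * (k : ℝ) + 1)) * A2 + 2 * A1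
  · simp
  · intro i
    have := KneserRS.card_M hk i
    have := KneserRS.card_M hk i0
    omega
end

section
/- For every integer m ≥ 1, letting n = 2^{2m} (so log₂ n is even), there exists an (n/4, 2·(log₂ n + 1))-Ruzsa–Szemerédi graph on n vertices. -/
namespace RSaux

variable (m : ℕ)

/-- The vertex type: `F_2^(2m)`. -/
abbrev Vt (m : ℕ) := Fin (2 * m) → ZMod 2

/-- Bilinear dot product on `F_2^(2m)`. -/
def dot (x y : Vt m) : ZMod 2 := ∑ i, x i * y i

/-- The directions: `d k = 1 + e_k` for `k < 2m`, and `d (2m) = 1` (all-ones). -/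
def dv (k : Fin (2 * m + 1)) : Vt m :=
  fun i => if (k : ℕ) < 2 * m then (if (i : ℕ) = (k : ℕ) then 0 else 1) else 1

/-- Separating functionals: `u k = e_k` for `k < 2m`, and `u (2m) = 1`. -/
def uv (k : Fin (2 * m + 1)) : Vt m :=
  fun i => if (k : ℕ) < 2 * m then (if (i : ℕ) = (k : ℕ) then 1 else 0) else 1

/-- Auxiliary functionals with `⟪d k, w k⟫ = 1`: `w k = 1` for `k < 2m`, else `e_0`. -/
def wv (k : Fin (2 * m + 1)) : Vt m :=
  fun i => if (k : ℕ) < 2 * m then 1 else (if (i : ℕ) = 0 then 1 else 0)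

lemma zmod2_cases : ∀ a : ZMod 2, a = 0 ∨ a = 1 := by decide

lemma zmod2_add_self : ∀ a : ZMod 2, a + a = 0 := by decide

lemma vadd_cancel (x v : Vt m) : (x + v) + v = x := by
  funext i
  show (x i + v i) + v i = x i
  have h : ∀ a b : ZMod 2, (a + b) + b = a := by decide
  exact h _ _

lemma dot_add_left (x y z : Vt m) : dot m (x + y) z = dot m x z + dot m y z := by
  unfold dot
  rw [← Finset.sum_add_distrib]
  refine Finset.sum_congr rfl fun i _ => ?_
  show (x i + y i) * z i = _
  ring

lemma dot_zero_left (z : Vt m) : dot m 0 z = 0 := by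
  unfold dot
  simp

lemma sum_ones : (∑ _i : Fin (2 * m), (1 : ZMod 2)) = 0 := by
  rw [Finset.sum_const, Finset.card_univ, Fintype.card_fin, nsmul_eq_mul, mul_one]
  have : ((2 * m : ℕ) : ZMod 2) = 0 := by
    push_cast
    have : ((2 : ZMod 2)) = 0 := by decide
    rw [this, zero_mul]
  exact this

/-- Sum of an indicator over `Fin (2m)`. -/
lemma sum_indicator (j : Fin (2 * m)) (f : Fin (2 * m) → ZMod 2) :
    (∑ i, (if i = j then f i else 0)) = f j := by
  rw [Finset.sum_ite_eq' Finset.univ j f]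
  simp

lemma sum_anti_indicator (j : Fin (2 * m)) :
    (∑ i : Fin (2 * m), (if i = j then (0 : ZMod 2) else 1)) = 1 := by
  have h : ∀ i : Fin (2 * m), (if i = j then (0 : ZMod 2) else 1)
      = 1 + (if i = j then (1 : ZMod 2) else 0) := by
    intro i; split <;> decide
  rw [Finset.sum_congr rfl (fun i _ => h i), Finset.sum_add_distrib, sum_ones,
    sum_indicator m j (fun _ => 1)]
  decide

lemma coe_eq_iff (a : ℕ) (h : a < 2 * m) (i : Fin (2 * m)) :
    ((i : ℕ) = a) ↔ i = ⟨a, h⟩ := by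
  rw [Fin.ext_iff]

lemma dot_dv_uv (j k : Fin (2 * m + 1)) :
    dot m (dv m j) (uv m k) = if j = k then 0 else 1 := by
  unfold dot dv uv
  by_cases hk : (k : ℕ) < 2 * m
  · have step : ∀ i : Fin (2 * m),
        (if (j : ℕ) < 2 * m then (if (i : ℕ) = (j : ℕ) then (0:ZMod 2) else 1) else 1) *
          (if (k : ℕ) < 2 * m then (if (i : ℕ) = (k : ℕ) then (1:ZMod 2) else 0) else 1)
        = (if i = (⟨(k : ℕ), hk⟩ : Fin (2 * m)) then
            (if (j : ℕ) < 2 * m then (if (i : ℕ) = (j : ℕ) then (0:ZMod 2) else 1) else 1) else 0) := by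
      intro i
      rw [if_pos hk, if_congr (coe_eq_iff m (k : ℕ) hk i) rfl rfl]
      split <;> simp
    rw [Finset.sum_congr rfl (fun i _ => step i), sum_indicator]
    by_cases hj : (j : ℕ) < 2 * m
    · rw [if_pos hj]
      by_cases hjk : j = k
      · have : ((⟨(k : ℕ), hk⟩ : Fin (2 * m)) : ℕ) = (j : ℕ) := by simp [hjk]
        rw [if_pos this, if_pos hjk]
      · have : ¬ ((⟨(k : ℕ), hk⟩ : Fin (2 * m)) : ℕ) = (j : ℕ) := by
          simp only []
          intro h; exact hjk (Fin.ext h.symm)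
        rw [if_neg this, if_neg hjk]
    · have hjk : j ≠ k := fun h => hj (h ▸ hk)
      rw [if_neg hj, if_neg hjk]
  · -- k = 2m, u k = all ones
    have hk2 : (k : ℕ) = 2 * m := by have := k.isLt; omega
    have step : ∀ i : Fin (2 * m),
        (if (j : ℕ) < 2 * m then (if (i : ℕ) = (j : ℕ) then (0:ZMod 2) else 1) else 1) *
          (if (k : ℕ) < 2 * m then (if (i : ℕ) = (k : ℕ) then (1:ZMod 2) else 0) else 1)
        = (if (j : ℕ) < 2 * m then (if (i : ℕ) = (j : ℕ) then (0:ZMod 2) else 1) else 1) := by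
      intro i
      rw [if_neg hk, mul_one]
    rw [Finset.sum_congr rfl (fun i _ => step i)]
    by_cases hj : (j : ℕ) < 2 * m
    · have hjk : j ≠ k := fun h => hk (h ▸ hj)
      rw [if_neg hjk]
      have step2 : ∀ i : Fin (2 * m),
          (if (j : ℕ) < 2 * m then (if (i : ℕ) = (j : ℕ) then (0:ZMod 2) else 1) else 1)
          = (if i = (⟨(j : ℕ), hj⟩ : Fin (2 * m)) then (0:ZMod 2) else 1) := by
        intro i
        rw [if_pos hj, if_congr (coe_eq_iff m (j : ℕ) hj i) rfl rfl]
      rw [Finset.sum_congr rfl (fun i _ => step2 i), sum_anti_indicator]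
    · have hjk : j = k := by
        apply Fin.ext
        have h1 := j.isLt
        have h2 := k.isLt
        omega
      rw [if_pos hjk]
      have step2 : ∀ i : Fin (2 * m),
          (if (j : ℕ) < 2 * m then (if (i : ℕ) = (j : ℕ) then (0:ZMod 2) else 1) else 1)
          = (1 : ZMod 2) := fun i => if_neg hj
      rw [Finset.sum_congr rfl (fun i _ => step2 i), sum_ones]

lemma dot_dv_wv (hm : 1 ≤ m) (k : Fin (2 * m + 1)) : dot m (dv m k) (wv m k) = 1 := by
  unfold dot dv wv
  by_cases hk : (k : ℕ) < 2 * m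
  · have step : ∀ i : Fin (2 * m),
        (if (k : ℕ) < 2 * m then (if (i : ℕ) = (k : ℕ) then (0:ZMod 2) else 1) else 1) *
          (if (k : ℕ) < 2 * m then (1:ZMod 2) else (if (i : ℕ) = 0 then 1 else 0))
        = (if i = (⟨(k : ℕ), hk⟩ : Fin (2 * m)) then (0:ZMod 2) else 1) := by
      intro i
      rw [if_pos hk, if_pos hk, mul_one, if_congr (coe_eq_iff m (k : ℕ) hk i) rfl rfl]
    rw [Finset.sum_congr rfl (fun i _ => step i), sum_anti_indicator]
  · have h0 : 0 < 2 * m := by omega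
    have step : ∀ i : Fin (2 * m),
        (if (k : ℕ) < 2 * m then (if (i : ℕ) = (k : ℕ) then (0:ZMod 2) else 1) else 1) *
          (if (k : ℕ) < 2 * m then (1:ZMod 2) else (if (i : ℕ) = 0 then 1 else 0))
        = (if i = (⟨0, h0⟩ : Fin (2 * m)) then (1:ZMod 2) else 0) := by
      intro i
      rw [if_neg hk, if_neg hk, one_mul, if_congr (coe_eq_iff m 0 h0 i) rfl rfl]
    rw [Finset.sum_congr rfl (fun i _ => step i), sum_indicator m _ (fun _ => 1)]

lemma dot_wv_uv (hm : 1 ≤ m) (k : Fin (2 * m + 1)) : dot m (wv m k) (uv m k) = 1 := by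
  unfold dot wv uv
  by_cases hk : (k : ℕ) < 2 * m
  · have step : ∀ i : Fin (2 * m),
        (if (k : ℕ) < 2 * m then (1:ZMod 2) else (if (i : ℕ) = 0 then 1 else 0)) *
          (if (k : ℕ) < 2 * m then (if (i : ℕ) = (k : ℕ) then (1:ZMod 2) else 0) else 1)
        = (if i = (⟨(k : ℕ), hk⟩ : Fin (2 * m)) then (1:ZMod 2) else 0) := by
      intro i
      rw [if_pos hk, if_pos hk, one_mul, if_congr (coe_eq_iff m (k : ℕ) hk i) rfl rfl]
    rw [Finset.sum_congr rfl (fun i _ => step i), sum_indicator m _ (fun _ => 1)]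
  · have h0 : 0 < 2 * m := by omega
    have step : ∀ i : Fin (2 * m),
        (if (k : ℕ) < 2 * m then (1:ZMod 2) else (if (i : ℕ) = 0 then 1 else 0)) *
          (if (k : ℕ) < 2 * m then (if (i : ℕ) = (k : ℕ) then (1:ZMod 2) else 0) else 1)
        = (if i = (⟨0, h0⟩ : Fin (2 * m)) then (1:ZMod 2) else 0) := by
      intro i
      rw [if_neg hk, if_neg hk, mul_one, if_congr (coe_eq_iff m 0 h0 i) rfl rfl]
    rw [Finset.sum_congr rfl (fun i _ => step i), sum_indicator m _ (fun _ => 1)]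

lemma dot_dv_uv_self (j : Fin (2 * m + 1)) : dot m (dv m j) (uv m j) = 0 := by
  rw [dot_dv_uv]; simp

lemma dv_ne_zero (hm : 1 ≤ m) (k : Fin (2 * m + 1)) : dv m k ≠ 0 := by
  intro h
  have := dot_dv_wv m hm k
  rw [h, dot_zero_left] at this
  exact zero_ne_one this

lemma dv_injective (j k : Fin (2 * m + 1)) (h : dv m j = dv m k) : j = k := by
  by_contra hjk
  have h1 := dot_dv_uv m j k
  have h2 := dot_dv_uv_self m k
  rw [h, h2] at h1
  simp [hjk] at h1

/-- The graph: `x ~ y` iff `y = x + d k` for some direction `k` (and `x ≠ y`). -/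
def G : SimpleGraph (Vt m) where
  Adj x y := x ≠ y ∧ ∃ k, y = x + dv m k
  symm := by
    constructor
    rintro x y ⟨hne, k, rfl⟩
    exact ⟨hne.symm, k, (vadd_cancel m x (dv m k)).symm⟩
  loopless := by constructor; rintro x ⟨hne, _⟩; exact hne rfl

/-- Direction index of the `i`-th matching. -/
def kOf (i : Fin (2 * (2 * m + 1))) : Fin (2 * m + 1) := ⟨(i : ℕ) / 2, by omega⟩

/-- Side (`0` or `1`) of the `i`-th matching. -/
def eOf (i : Fin (2 * (2 * m + 1))) : ZMod 2 := if (i : ℕ) % 2 = 0 then 0 else 1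

/-- The `i`-th induced matching. -/
def Mset (i : Fin (2 * (2 * m + 1))) : Finset (Sym2 (Vt m)) :=
  (Finset.univ.filter
    (fun x => dot m x (uv m (kOf m i)) = eOf m i ∧ dot m x (wv m (kOf m i)) = 0)).image
    (fun x => s(x, x + dv m (kOf m i)))

lemma mem_Mset (i : Fin (2 * (2 * m + 1))) (e : Sym2 (Vt m)) :
    e ∈ Mset m i ↔ ∃ x, (dot m x (uv m (kOf m i)) = eOf m i ∧ dot m x (wv m (kOf m i)) = 0)
      ∧ s(x, x + dv m (kOf m i)) = e := by
  unfold Mset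
  simp [Finset.mem_image, Finset.mem_filter]

lemma vadd_self (v : Vt m) : v + v = 0 := by
  funext i
  exact zmod2_add_self (v i)

lemma card_Vt : Fintype.card (Vt m) = 2 ^ (2 * m) := by
  rw [Fintype.card_fun, ZMod.card, Fintype.card_fin]

lemma card_filter_shift (p q : Vt m → Prop) [DecidablePred p] [DecidablePred q]
    (v : Vt m) (hpq : ∀ x, p x → q (x + v)) (hqp : ∀ x, q x → p (x + v)) :
    (Finset.univ.filter p).card = (Finset.univ.filter q).card := by
  apply Finset.card_nbij' (fun x => x + v) (fun x => x + v)
  · intro x hx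
    rw [Finset.mem_coe, Finset.mem_filter] at hx ⊢
    exact ⟨Finset.mem_univ _, hpq x hx.2⟩
  · intro x hx
    rw [Finset.mem_coe, Finset.mem_filter] at hx ⊢
    exact ⟨Finset.mem_univ _, hqp x hx.2⟩
  · intro x _; exact vadd_cancel m x v
  · intro x _; exact vadd_cancel m x v

lemma card_filter_split (p : Vt m → Prop) [DecidablePred p] (g : Vt m → ZMod 2) :
    (Finset.univ.filter p).card
      = (Finset.univ.filter (fun x => p x ∧ g x = 0)).card
        + (Finset.univ.filter (fun x => p x ∧ g x = 1)).card := by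
  have hdis : Disjoint (Finset.univ.filter (fun x => p x ∧ g x = 0))
      (Finset.univ.filter (fun x => p x ∧ g x = 1)) := by
    rw [Finset.disjoint_left]
    intro x hx hx'
    rw [Finset.mem_filter] at hx hx'
    rw [hx.2.2] at hx'
    exact (by decide : (0 : ZMod 2) ≠ 1) hx'.2.2
  rw [← Finset.card_union_of_disjoint hdis]
  congr 1
  ext x
  simp only [Finset.mem_filter, Finset.mem_union, Finset.mem_univ, true_and]
  constructor
  · intro hx
    rcases zmod2_cases (g x) with h | h
    · exact Or.inl ⟨hx, h⟩
    · exact Or.inr ⟨hx, h⟩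
  · rintro (⟨hx, _⟩ | ⟨hx, _⟩) <;> exact hx

lemma card_M_filter (hm : 1 ≤ m) (k : Fin (2 * m + 1)) (ε : ZMod 2) :
    4 * (Finset.univ.filter
      (fun x => dot m x (uv m k) = ε ∧ dot m x (wv m k) = 0)).card = 2 ^ (2 * m) := by
  -- within the halfspace, the two w-classes are equinumerous (shift by dv k)
  have hshift1 : (Finset.univ.filter
        (fun x => dot m x (uv m k) = ε ∧ dot m x (wv m k) = 0)).card
      = (Finset.univ.filter
        (fun x => dot m x (uv m k) = ε ∧ dot m x (wv m k) = 1)).card := by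
    apply card_filter_shift m _ _ (dv m k)
    · rintro x ⟨h1, h2⟩
      constructor
      · rw [dot_add_left, h1, dot_dv_uv_self, add_zero]
      · rw [dot_add_left, h2, dot_dv_wv m hm, zero_add]
    · rintro x ⟨h1, h2⟩
      constructor
      · rw [dot_add_left, h1, dot_dv_uv_self, add_zero]
      · rw [dot_add_left, h2, dot_dv_wv m hm]
        decide
  have hsplit1 : (Finset.univ.filter (fun x => dot m x (uv m k) = ε)).card
      = (Finset.univ.filter
          (fun x => dot m x (uv m k) = ε ∧ dot m x (wv m k) = 0)).card
        + (Finset.univ.filter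
          (fun x => dot m x (uv m k) = ε ∧ dot m x (wv m k) = 1)).card :=
    card_filter_split m _ _
  -- the two u-halfspaces are equinumerous (shift by wv k)
  have hshift2 : (Finset.univ.filter (fun x => dot m x (uv m k) = 0)).card
      = (Finset.univ.filter (fun x => dot m x (uv m k) = 1)).card := by
    apply card_filter_shift m _ _ (wv m k)
    · intro x h1
      rw [dot_add_left, h1, dot_wv_uv m hm, zero_add]
    · intro x h1
      rw [dot_add_left, h1, dot_wv_uv m hm]
      decide
  have hsplit2 : (Finset.univ : Finset (Vt m)).card
      = (Finset.univ.filter (fun x => dot m x (uv m k) = 0)).card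
        + (Finset.univ.filter (fun x => dot m x (uv m k) = 1)).card := by
    have := card_filter_split m (fun _ : Vt m => True) (fun x => dot m x (uv m k))
    simpa using this
  have htotal : (Finset.univ : Finset (Vt m)).card = 2 ^ (2 * m) := by
    rw [Finset.card_univ, card_Vt]
  rcases zmod2_cases ε with rfl | rfl
  · omega
  · omega

lemma index_eq (i j : Fin (2 * (2 * m + 1))) (hk : kOf m i = kOf m j)
    (he : eOf m i = eOf m j) : i = j := by
  have hk' : (i : ℕ) / 2 = (j : ℕ) / 2 := by
    have := congrArg Fin.val hk
    simpa [kOf] using this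
  have he' : (i : ℕ) % 2 = (j : ℕ) % 2 := by
    by_cases h1 : (i : ℕ) % 2 = 0 <;> by_cases h2 : (j : ℕ) % 2 = 0
    · omega
    · exfalso
      rw [eOf, eOf, if_pos h1, if_neg h2] at he
      exact (by decide : (0 : ZMod 2) ≠ 1) he
    · exfalso
      rw [eOf, eOf, if_neg h1, if_pos h2] at he
      exact (by decide : (0 : ZMod 2) ≠ 1) he.symm
    · omega
  apply Fin.ext
  omega

/-- The index corresponding to direction `k` and side `ε`. -/
def idxOf (k : Fin (2 * m + 1)) (ε : ZMod 2) : Fin (2 * (2 * m + 1)) :=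
  ⟨2 * (k : ℕ) + ε.val, by
    have hk := k.isLt
    have hε : ε.val < 2 := ZMod.val_lt ε
    omega⟩

lemma kOf_idxOf (k : Fin (2 * m + 1)) (ε : ZMod 2) : kOf m (idxOf m k ε) = k := by
  apply Fin.ext
  have hε : ε.val < 2 := ZMod.val_lt ε
  show (2 * (k : ℕ) + ε.val) / 2 = (k : ℕ)
  omega

lemma eOf_idxOf (k : Fin (2 * m + 1)) (ε : ZMod 2) : eOf m (idxOf m k ε) = ε := by
  have hval : ((idxOf m k ε) : ℕ) = 2 * (k : ℕ) + ε.val := rfl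
  rw [eOf, hval]
  rcases zmod2_cases ε with rfl | rfl
  · have h0 : (0 : ZMod 2).val = 0 := by decide
    rw [if_pos (by omega)]
  · have h1 : (1 : ZMod 2).val = 1 := by decide
    rw [if_neg (by omega)]

lemma Mset_subset (hm : 1 ≤ m) (i : Fin (2 * (2 * m + 1))) :
    ↑(Mset m i) ⊆ (G m).edgeSet := by
  intro e he
  rw [Finset.mem_coe, mem_Mset] at he
  obtain ⟨x, ⟨hu, hw⟩, rfl⟩ := he
  rw [SimpleGraph.mem_edgeSet]
  refine ⟨?_, kOf m i, rfl⟩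
  intro h
  have h0 : (0 : Vt m) = dv m (kOf m i) := by
    apply add_left_cancel (a := x)
    rw [add_zero]
    exact h
  exact dv_ne_zero m hm (kOf m i) h0.symm

lemma Mset_matching (hm : 1 ≤ m) (i : Fin (2 * (2 * m + 1))) :
    ∀ e ∈ Mset m i, ∀ f ∈ Mset m i, e ≠ f → ∀ v : Vt m, v ∈ e → v ∉ f := by
  intro e he f hf hef v hve hvf
  rw [mem_Mset] at he hf
  obtain ⟨x, ⟨hxu, hxw⟩, rfl⟩ := he
  obtain ⟨y, ⟨hyu, hyw⟩, rfl⟩ := hf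
  set k := kOf m i
  have key : ∀ a b : Vt m, dot m a (wv m k) = 0 → dot m b (wv m k) = 0 →
      a = b + dv m k → False := by
    intro a b ha hb hab
    have : dot m a (wv m k) = 1 := by
      rw [hab, dot_add_left, hb, dot_dv_wv m hm, zero_add]
    rw [ha] at this
    exact (by decide : (0 : ZMod 2) ≠ 1) this
  rw [Sym2.mem_iff] at hve hvf
  rcases hve with h1 | h1 <;> rcases hvf with h2 | h2
  · exact hef (by rw [h1.symm.trans h2])
  · exact key x y hxw hyw (h1.symm.trans h2)
  · exact key y x hyw hxw (h2.symm.trans h1)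
  · have : x = y := add_right_cancel (h1.symm.trans h2)
    exact hef (by rw [this])

lemma Mset_card (hm : 1 ≤ m) (i : Fin (2 * (2 * m + 1))) :
    (Mset m i).card = 2 ^ (2 * m) / 4 := by
  set k := kOf m i
  have hinj : Set.InjOn (fun x => s(x, x + dv m k))
      ↑(Finset.univ.filter
        (fun x => dot m x (uv m k) = eOf m i ∧ dot m x (wv m k) = 0)) := by
    intro x hx y hy hxy
    rw [Finset.mem_coe, Finset.mem_filter] at hx hy
    simp only [Sym2.eq, Sym2.rel_iff', Prod.mk.injEq, Prod.swap_prod_mk] at hxy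
    rcases hxy with ⟨h1, _⟩ | ⟨h1, h2⟩
    · exact h1
    · exfalso
      have : dot m x (wv m k) = 1 := by
        rw [h1, dot_add_left, hy.2.2, dot_dv_wv m hm, zero_add]
      rw [hx.2.2] at this
      exact (by decide : (0 : ZMod 2) ≠ 1) this
  rw [Mset, Finset.card_image_of_injOn hinj]
  have h4 := card_M_filter m hm k (eOf m i)
  omega

lemma Mset_induced (hm : 1 ≤ m) (i : Fin (2 * (2 * m + 1))) :
    IsInducedMatching (G m) (Mset m i) := by
  refine ⟨Mset_subset m hm i, Mset_matching m hm i, ?_⟩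
  intro e he hcov
  induction e using Sym2.ind with
  | _ a b =>
    rw [SimpleGraph.mem_edgeSet] at he
    obtain ⟨hne, j, rfl⟩ := he
    -- both endpoints lie in the halfspace
    have hcover : ∀ v : Vt m, (∃ f ∈ Mset m i, v ∈ f) →
        dot m v (uv m (kOf m i)) = eOf m i := by
      intro v ⟨f, hf, hvf⟩
      rw [mem_Mset] at hf
      obtain ⟨x, ⟨hxu, _⟩, rfl⟩ := hf
      rw [Sym2.mem_iff] at hvf
      rcases hvf with rfl | rfl
      · exact hxu
      · rw [dot_add_left, hxu, dot_dv_uv_self, add_zero]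
    have hau : dot m a (uv m (kOf m i)) = eOf m i :=
      hcover a (hcov a (Sym2.mem_mk_left a _))
    have hbu : dot m (a + dv m j) (uv m (kOf m i)) = eOf m i :=
      hcover (a + dv m j) (hcov (a + dv m j) (Sym2.mem_mk_right a _))
    have hjk : j = kOf m i := by
      by_contra hjk
      have h1 := dot_dv_uv m j (kOf m i)
      rw [if_neg hjk] at h1
      rw [dot_add_left, hau, h1] at hbu
      have h2 : eOf m i + 1 = eOf m i + 0 := by rw [add_zero]; exact hbu
      exact (by decide : (1 : ZMod 2) ≠ 0) (add_left_cancel h2)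
    subst hjk
    rw [mem_Mset]
    rcases zmod2_cases (dot m a (wv m (kOf m i))) with h0 | h1
    · exact ⟨a, ⟨hau, h0⟩, rfl⟩
    · refine ⟨a + dv m (kOf m i), ⟨hbu, ?_⟩, ?_⟩
      · rw [dot_add_left, h1, dot_dv_wv m hm]
        decide
      · rw [vadd_cancel]
        exact Sym2.eq_swap

lemma Mset_disjoint (hm : 1 ≤ m) (i j : Fin (2 * (2 * m + 1))) (hij : i ≠ j) :
    Disjoint (Mset m i) (Mset m j) := by
  rw [Finset.disjoint_left]
  intro e hei hej
  rw [mem_Mset] at hei hej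
  obtain ⟨x, ⟨hxu, hxw⟩, rfl⟩ := hei
  obtain ⟨y, ⟨hyu, hyw⟩, he⟩ := hej
  simp only [Sym2.eq, Sym2.rel_iff', Prod.mk.injEq, Prod.swap_prod_mk] at he
  rcases he with ⟨h1, h2⟩ | ⟨h1, h2⟩
  · -- same representative: directions and sides agree, so i = j
    subst h1
    have hd : dv m (kOf m j) = dv m (kOf m i) := add_left_cancel h2
    have hkk : kOf m j = kOf m i := dv_injective m _ _ hd
    have hee : eOf m j = eOf m i := by rw [← hxu, ← hyu, hkk]
    exact hij (index_eq m i j hkk.symm hee.symm)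
  · -- crossed: then x and y differ by the common direction, contradicting w-normalization
    exfalso
    have hsum : dv m (kOf m i) + dv m (kOf m j) = 0 := by
      apply add_left_cancel (a := x)
      rw [add_zero, ← add_assoc, ← h1]
      exact h2
    have hd : dv m (kOf m i) = dv m (kOf m j) := by
      have h3 : dv m (kOf m i) + (dv m (kOf m i) + dv m (kOf m j))
          = dv m (kOf m i) + 0 := by rw [hsum]
      rw [← add_assoc, vadd_self, zero_add, add_zero] at h3
      exact h3.symm
    have hkk : kOf m i = kOf m j := dv_injective m _ _ hd
    have hcon : dot m y (wv m (kOf m i)) = 1 := by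
      rw [h1, dot_add_left, hxw, dot_dv_wv m hm, zero_add]
    rw [hkk, hyw] at hcon
    exact (by decide : (0 : ZMod 2) ≠ 1) hcon

lemma edge_iff (hm : 1 ≤ m) (e : Sym2 (Vt m)) :
    e ∈ (G m).edgeSet ↔ ∃ i, e ∈ Mset m i := by
  constructor
  · intro he
    induction e using Sym2.ind with
    | _ a b =>
      rw [SimpleGraph.mem_edgeSet] at he
      obtain ⟨hne, j, rfl⟩ := he
      refine ⟨idxOf m j (dot m a (uv m j)), ?_⟩
      rw [mem_Mset, kOf_idxOf, eOf_idxOf]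
      rcases zmod2_cases (dot m a (wv m j)) with h0 | h1
      · exact ⟨a, ⟨rfl, h0⟩, rfl⟩
      · refine ⟨a + dv m j, ⟨?_, ?_⟩, ?_⟩
        · rw [dot_add_left, dot_dv_uv_self, add_zero]
        · rw [dot_add_left, h1, dot_dv_wv m hm]
          decide
        · rw [vadd_cancel]
          exact Sym2.eq_swap
  · rintro ⟨i, hi⟩
    exact Mset_subset m hm i hi

end RSaux

open RSaux

/-- For every integer `m ≥ 1`, letting `n = 2^(2m)` (so that `log₂ n = 2m` is even),
there exists an `(n/4, 2·(log₂ n + 1))`-RS graph on `n` vertices. -/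
theorem exists_RS_even_power_of_two (m : ℕ) (hm : 1 ≤ m) :
    ∃ (V : Type) (inst : Fintype V) (G : SimpleGraph V),
      @Fintype.card V inst = 2 ^ (2 * m) ∧
      IsRSGraph G (2 ^ (2 * m) / 4) (2 * (2 * m + 1)) := by
  refine ⟨Vt m, inferInstance, RSaux.G m, card_Vt m, Mset m, ?_, ?_, ?_, ?_⟩
  · exact fun i => Mset_induced m hm i
  · exact fun i => Mset_card m hm i
  · exact fun i j hij => Mset_disjoint m hm i j hij
  · exact fun e => edge_iff m hm e
end

section
/- (Plotkin-type bound) Let v₀, v₁, …, v_t be t+1 vectors in {0,1}^n such that the Hamming distance between any two distinct vectors is at least d. Then d·(t+1)·t/2 ≤ n·⌊(t+1)²/4⌋; in particular, d·(t+1)·t/2 ≤ n·(t+1)²/4 when t is odd, and d·(t+1)·t/2 ≤ n·t·(t+2)/4 when t is even. -/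
open Finset

private lemma plotkin_coord_bound {N : ℕ} (w : Fin N → Bool) :
    ∑ p ∈ (univ : Finset (Fin N)).offDiag, (if w p.1 ≠ w p.2 then 1 else 0)
      ≤ 2 * (N ^ 2 / 4) := by
  classical
  set m := #{i : Fin N | w i = true} with hm
  set mc := #{i : Fin N | ¬ w i = true} with hmc
  have hsum : m + mc = N := by
    rw [hm, hmc, Finset.card_filter_add_card_filter_not]
    simp
  have h1 : ∑ p ∈ (univ : Finset (Fin N)).offDiag, (if w p.1 ≠ w p.2 then 1 else 0)
      = ∑ p ∈ (univ ×ˢ univ : Finset (Fin N × Fin N)), (if w p.1 ≠ w p.2 then 1 else 0) := by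
    apply Finset.sum_subset
    · intro x hx
      simp [Finset.mem_offDiag] at hx ⊢
    · intro x _ hx
      have : x.1 = x.2 := by
        by_contra h
        exact hx (Finset.mem_offDiag.mpr ⟨Finset.mem_univ _, Finset.mem_univ _, h⟩)
      simp [this]
  rw [h1, Finset.sum_product]
  have h2 : ∀ i : Fin N, (∑ j : Fin N, (if w i ≠ w j then 1 else 0))
      = if w i = true then mc else m := by
    intro i
    cases hwi : w i with
    | true =>
      simp only [hwi, if_true]
      rw [Finset.sum_boole]
      simp only [Nat.cast_id, hmc]
      congr 1
      ext j
      cases hwj : w j <;> simp [hwj]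
    | false =>
      simp only [hwi, Bool.false_eq_true, if_false]
      rw [Finset.sum_boole]
      simp only [Nat.cast_id, hm]
      congr 1
      ext j
      cases hwj : w j <;> simp [hwj]
  simp_rw [h2]
  rw [Finset.sum_ite, Finset.sum_const, Finset.sum_const]
  have hmle : m * mc ≤ N ^ 2 / 4 := by
    rw [Nat.le_div_iff_mul_le (by norm_num), ← hsum]
    nlinarith [two_mul_le_add_sq m mc]
  have : #{i : Fin N | w i = true} = m := hm.symm
  calc #{i : Fin N | w i = true} • mc + #{i : Fin N | ¬w i = true} • m
      = m * mc + mc * m := by rw [← hm, ← hmc]; simp [smul_eq_mul]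
    _ ≤ N ^ 2 / 4 + N ^ 2 / 4 := by
        apply Nat.add_le_add hmle
        rw [Nat.mul_comm]; exact hmle
    _ = 2 * (N ^ 2 / 4) := by ring

/-- **Plotkin-type bound.** If `v₀, v₁, …, v_t` are `t+1` vectors in `{0,1}^n` whose pairwise
Hamming distances are all at least `d`, then `d·(t+1)·t/2 ≤ n·⌊(t+1)²/4⌋`; in particular,
`2·d·(t+1)·t ≤ n·(t+1)²` when `t` is odd, and `2·d·(t+1)·t ≤ n·t·(t+2)` when `t` is even. -/
theorem plotkin_type_bound (n t d : ℕ) (v : Fin (t + 1) → Fin n → Bool)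
    (hd : ∀ i j : Fin (t + 1), i ≠ j → d ≤ hammingDist (v i) (v j)) :
    d * ((t + 1) * t) / 2 ≤ n * ((t + 1) ^ 2 / 4) ∧
    (Odd t → 2 * (d * ((t + 1) * t)) ≤ n * (t + 1) ^ 2) ∧
    (Even t → 2 * (d * ((t + 1) * t)) ≤ n * (t * (t + 2))) := by
  classical
  set X := (t + 1) ^ 2 / 4 with hX
  have key : d * ((t + 1) * t) ≤ 2 * (n * X) := by
    have card_off : ((univ : Finset (Fin (t+1))).offDiag).card = (t + 1) * t := by
      rw [Finset.offDiag_card]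
      simp [Nat.mul_sub_one]
      ring_nf
      omega
    have h1 : d * ((t + 1) * t)
        ≤ ∑ p ∈ (univ : Finset (Fin (t+1))).offDiag, hammingDist (v p.1) (v p.2) := by
      calc d * ((t + 1) * t) = ∑ _p ∈ (univ : Finset (Fin (t+1))).offDiag, d := by
            rw [Finset.sum_const, card_off, smul_eq_mul, Nat.mul_comm]
        _ ≤ _ := Finset.sum_le_sum fun p hp =>
            hd p.1 p.2 (Finset.mem_offDiag.mp hp).2.2
    have h2 : ∑ p ∈ (univ : Finset (Fin (t+1))).offDiag, hammingDist (v p.1) (v p.2)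
        = ∑ k : Fin n, ∑ p ∈ (univ : Finset (Fin (t+1))).offDiag,
            (if v p.1 k ≠ v p.2 k then 1 else 0) := by
      rw [Finset.sum_comm]
      apply Finset.sum_congr rfl
      intro p _
      rw [hammingDist, Finset.card_filter]
    have h3 : ∑ k : Fin n, ∑ p ∈ (univ : Finset (Fin (t+1))).offDiag,
        (if v p.1 k ≠ v p.2 k then 1 else 0) ≤ ∑ _k : Fin n, 2 * X := by
      apply Finset.sum_le_sum
      intro k _
      exact plotkin_coord_bound (fun i => v i k)
    calc d * ((t + 1) * t) ≤ _ := h1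
      _ = _ := h2
      _ ≤ ∑ _k : Fin n, 2 * X := h3
      _ = n * (2 * X) := by rw [Finset.sum_const, card_univ, Fintype.card_fin, smul_eq_mul]
      _ = 2 * (n * X) := by ring
  refine ⟨?_, ?_, ?_⟩
  · calc d * ((t + 1) * t) / 2 ≤ 2 * (n * X) / 2 := Nat.div_le_div_right key
      _ = n * X := by omega
  · rintro ⟨s, rfl⟩
    have h4 : 4 * X = (2 * s + 1 + 1) ^ 2 := by
      rw [hX]
      have : (2 * s + 1 + 1) ^ 2 = 4 * (s + 1) ^ 2 := by ring
      rw [this, Nat.mul_div_cancel_left _ (by norm_num)]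
    calc 2 * (d * ((2 * s + 1 + 1) * (2 * s + 1))) ≤ 2 * (2 * (n * X)) := by
          nlinarith [key]
      _ = n * (4 * X) := by ring
      _ = n * (2 * s + 1 + 1) ^ 2 := by rw [h4]
    -- note: goal shape fixed below
  · rintro ⟨s, rfl⟩
    have h4 : 4 * X = (s + s) * ((s + s) + 2) := by
      rw [hX]
      have : (s + s + 1) ^ 2 = 4 * (s * s + s) + 1 := by ring
      rw [this]
      have h5 : (4 * (s * s + s) + 1) / 4 = s * s + s := by omega
      rw [h5]; ring
    calc 2 * (d * ((s + s + 1) * (s + s))) ≤ 2 * (2 * (n * X)) := by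
          nlinarith [key]
      _ = n * (4 * X) := by ring
      _ = n * ((s + s) * ((s + s) + 2)) := by rw [h4]
end
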